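/- arXiv:0812.0150 — 5 statements merged into one kernel-verified Lean document; each statement's English description precedes it below -/
import Mathlib

section
/- In any symmetric Picard category 𝒜, for all objects a and b the square κ_{a,b} ≫ (s_{a,b})^• = s_{a^•,b^•} ≫ κ_{b,a} commutes, where s denotes the braiding (symmetry) of 𝒜, s_{a,b} : a ⊗ b ⟶ b ⊗ a, and (s_{a,b})^• : (b ⊗ a)^• ⟶ (a ⊗ b)^• is its dual morphism. -/
open CategoryTheory Category MonoidalCategory

universe v u

/-- A symmetric Picard category: a symmetric monoidal groupoid equipped with, for every
object `a`, a chosen object `dual a` and a chosen isomorphism `j a : 𝟙_ C ≅ dual a ⊗ a`. -/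
class SymmetricPicard (C : Type u) [Groupoid.{v} C] [MonoidalCategory C]
    [SymmetricCategory C] where
  dual : C → C
  j : ∀ a : C, 𝟙_ C ≅ dual a ⊗ a

namespace SymmetricPicard

variable {C : Type u} [Groupoid.{v} C] [MonoidalCategory C] [SymmetricCategory C]
  [SymmetricPicard C]

/-- The dual of a morphism `f : a ⟶ b`: the unique morphism `g : dual b ⟶ dual a`
such that `(j b).hom ≫ (g ⊗ inv f) = (j a).hom`. -/
noncomputable def dualHom {a b : C} (f : a ⟶ b) : dual b ⟶ dual a :=
  @Classical.epsilon _
    ⟨(ρ_ (dual b)).inv ≫ (dual b ◁ (j a).hom) ≫ (dual b ◁ (dual a ◁ f)) ≫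
      (α_ (dual b) (dual a) b).inv ≫ ((β_ (dual b) (dual a)).hom ▷ b) ≫
      (α_ (dual a) (dual b) b).hom ≫ (dual a ◁ (j b).inv) ≫ (ρ_ (dual a)).hom⟩
    (fun g => (j b).hom ≫ (g ⊗ₘ inv f) = (j a).hom)

/-- The canonical pairing `(a^• ⊗ b^•) ⊗ (b ⊗ a) ⟶ 𝟙`. -/
noncomputable def pairing (a b : C) : (dual a ⊗ dual b) ⊗ (b ⊗ a) ⟶ 𝟙_ C :=
  (α_ (dual a) (dual b) (b ⊗ a)).hom ≫ (𝟙 (dual a) ⊗ₘ (α_ (dual b) b a).inv) ≫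
    (𝟙 (dual a) ⊗ₘ ((j b).inv ⊗ₘ 𝟙 a)) ≫ (𝟙 (dual a) ⊗ₘ (λ_ a).hom) ≫ (j a).inv

/-- Laplaza's canonical arrow `κ_{a,b} : a^• ⊗ b^• ⟶ (b ⊗ a)^•`: the unique morphism `f`
such that `(f ⊗ 𝟙_{b⊗a}) ≫ j_{b⊗a}⁻¹` is the canonical pairing. -/
noncomputable def kappa (a b : C) : dual a ⊗ dual b ⟶ dual (b ⊗ a) :=
  @Classical.epsilon _
    ⟨(ρ_ (dual a ⊗ dual b)).inv ≫ ((dual a ⊗ dual b) ◁ (j (b ⊗ a)).hom) ≫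
      ((dual a ⊗ dual b) ◁ (β_ (dual (b ⊗ a)) (b ⊗ a)).hom) ≫
      (α_ (dual a ⊗ dual b) (b ⊗ a) (dual (b ⊗ a))).inv ≫
      (pairing a b ▷ dual (b ⊗ a)) ≫ (λ_ (dual (b ⊗ a))).hom⟩
    (fun f => (f ⊗ₘ 𝟙 (b ⊗ a)) ≫ (j (b ⊗ a)).inv = pairing a b)


/-- Tensoring on the right with any object is an equivalence. -/
noncomputable def tensorRightEquiv (b : C) : C ≌ C :=
  CategoryTheory.Equivalence.mk (tensorRight b) (tensorRight (dual b))
    (NatIso.ofComponents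
      (fun X => (ρ_ X).symm ≪≫ whiskerLeftIso X ((β_ b (dual b)) ≪≫ (j b).symm).symm ≪≫
        (α_ X b (dual b)).symm)
      (by intros; simp only [Functor.flip_obj_obj, Functor.flip_obj_map, curriedTensor_obj_obj, curriedTensor_map_app, Functor.id_obj, Functor.id_map,
            Functor.comp_obj, Functor.comp_map, Iso.trans_hom, Iso.symm_hom, whiskerLeftIso_hom,
            Iso.trans_inv, Iso.symm_inv, assoc, rightUnitor_inv_naturality_assoc,
            ← whisker_exchange_assoc, associator_inv_naturality_left]))
    (NatIso.ofComponents
      (fun X => (α_ X (dual b) b) ≪≫ whiskerLeftIso X (j b).symm ≪≫ (ρ_ X))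
      (by intros; simp only [Functor.flip_obj_obj, Functor.flip_obj_map, curriedTensor_obj_obj, curriedTensor_map_app, Functor.id_obj, Functor.id_map,
            Functor.comp_obj, Functor.comp_map, Iso.trans_hom, Iso.symm_hom, whiskerLeftIso_hom,
            assoc, associator_naturality_left_assoc, ← whisker_exchange_assoc]
          simp))

lemma whiskerRight_cancel {x y : C} (c : C) {g g' : x ⟶ y} (h : g ▷ c = g' ▷ c) : g = g' :=
  (tensorRightEquiv c).functor.map_injective (by exact h)

lemma exists_whiskerRight (c : C) {x y : C} (h : x ⊗ c ⟶ y ⊗ c) : ∃ g : x ⟶ y, g ▷ c = h := by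
  obtain ⟨g, hg⟩ := (tensorRightEquiv c).functor.map_surjective h
  exact ⟨g, by exact hg⟩

lemma dualHom_spec {a b : C} (f : a ⟶ b) :
    (j b).hom ≫ (dualHom f ⊗ₘ inv f) = (j a).hom := by
  obtain ⟨g, hg⟩ := exists_whiskerRight b ((j b).inv ≫ (j a).hom ≫ (dual a ◁ f))
  exact Classical.epsilon_spec (p := fun g : dual b ⟶ dual a =>
    (j b).hom ≫ (g ⊗ₘ inv f) = (j a).hom)
    ⟨g, by show (j b).hom ≫ (g ⊗ₘ inv f) = (j a).hom
           rw [MonoidalCategory.tensorHom_def, hg]; simp [← MonoidalCategory.whiskerLeft_comp]⟩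

lemma kappa_spec (a b : C) :
    (kappa a b ⊗ₘ 𝟙 (b ⊗ a)) ≫ (j (b ⊗ a)).inv = pairing a b := by
  obtain ⟨g, hg⟩ := exists_whiskerRight (b ⊗ a) (pairing a b ≫ (j (b ⊗ a)).hom)
  exact Classical.epsilon_spec (p := fun f : dual a ⊗ dual b ⟶ dual (b ⊗ a) =>
    (f ⊗ₘ 𝟙 (b ⊗ a)) ≫ (j (b ⊗ a)).inv = pairing a b)
    ⟨g, by show (g ⊗ₘ 𝟙 (b ⊗ a)) ≫ (j (b ⊗ a)).inv = pairing a b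
           rw [tensorHom_id, hg]; simp⟩

lemma lemA (a b da db : C) (u : da ⊗ a ⟶ 𝟙_ C) (v : db ⊗ b ⟶ 𝟙_ C) :
    ((da ⊗ db) ◁ (β_ a b).hom) ≫ (α_ da db (b ⊗ a)).hom ≫ (da ◁ (α_ db b a).inv) ≫
      (da ◁ (v ▷ a)) ≫ (da ◁ (λ_ a).hom) ≫ u =
    tensorμ da db a b ≫ ((da ⊗ a) ◁ v) ≫ (ρ_ (da ⊗ a)).hom ≫ u := by
  have h1 : v ▷ a ≫ (λ_ a).hom = (β_ (db ⊗ b) a).hom ≫ a ◁ v ≫ (ρ_ a).hom := by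
    rw [← braiding_rightUnitor, BraidedCategory.braiding_naturality_left_assoc]
  rw [← MonoidalCategory.whiskerLeft_comp_assoc da (v ▷ a), h1]
  rw [associator_naturality_right_assoc]
  simp only [BraidedCategory.braiding_tensor_left_hom, MonoidalCategory.whiskerLeft_comp, assoc,
    Iso.inv_hom_id_assoc]
  simp only [← MonoidalCategory.whiskerLeft_comp_assoc, ← MonoidalCategory.whiskerLeft_comp,
    assoc, Iso.inv_hom_id_assoc, SymmetricCategory.symmetry_assoc]
  rw [SymmetricCategory.symmetry]
  simp only [MonoidalCategory.whiskerLeft_id, id_comp, MonoidalCategory.whiskerLeft_comp, assoc,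
    tensorμ]
  monoidal

lemma lemE (x1 x2 y1 y2 : C) :
    ((β_ x1 x2).hom ⊗ₘ (β_ y1 y2).hom) ≫ tensorμ x2 x1 y2 y1 =
      tensorμ x1 x2 y1 y2 ≫ (β_ (x1 ⊗ y1) (x2 ⊗ y2)).hom := by
  symm
  simp [tensorμ, MonoidalCategory.tensorHom_def]
  rw [← MonoidalCategory.whiskerLeft_comp_assoc x1 ((β_ x2 y1).hom ▷ y2),
    ← comp_whiskerRight, SymmetricCategory.symmetry]
  simp only [id_whiskerRight, MonoidalCategory.whiskerLeft_id, id_comp]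
  monoidal

lemma lemC (a b da db : C) (u : da ⊗ a ⟶ 𝟙_ C) (v : db ⊗ b ⟶ 𝟙_ C) :
    ((β_ da db).hom ▷ (a ⊗ b)) ≫ ((db ⊗ da) ◁ (β_ a b).hom) ≫ tensorμ db da b a ≫
      ((db ⊗ b) ◁ u) ≫ (ρ_ (db ⊗ b)).hom ≫ v =
    tensorμ da db a b ≫ ((da ⊗ a) ◁ v) ≫ (ρ_ (da ⊗ a)).hom ≫ u := by
  rw [← tensorHom_def_assoc]
  slice_lhs 1 2 => rw [lemE]
  simp only [assoc]
  rw [← BraidedCategory.braiding_naturality_left_assoc u (db ⊗ b)]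
  simp only [braiding_tensorUnit_left, assoc, Iso.inv_hom_id_assoc,
    Iso.inv_hom_id, comp_id]
  rw [← leftUnitor_naturality]
  rw [← whisker_exchange_assoc]
  simp [← unitors_equal, rightUnitor_naturality]
  simp [← unitors_inv_equal]

lemma core (a b : C) :
    ((dual a ⊗ dual b) ◁ (β_ a b).hom) ≫ pairing a b =
      ((β_ (dual a) (dual b)).hom ▷ (a ⊗ b)) ≫ pairing b a := by
  have hL : ((dual a ⊗ dual b) ◁ (β_ a b).hom) ≫ pairing a b =
      tensorμ (dual a) (dual b) a b ≫ ((dual a ⊗ a) ◁ (j b).inv) ≫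
        (ρ_ (dual a ⊗ a)).hom ≫ (j a).inv := by
    simp only [pairing, id_tensorHom, tensorHom_id, assoc]
    exact lemA a b (dual a) (dual b) (j a).inv (j b).inv
  have hR : ((dual b ⊗ dual a) ◁ (β_ b a).hom) ≫ pairing b a =
      tensorμ (dual b) (dual a) b a ≫ ((dual b ⊗ b) ◁ (j a).inv) ≫
        (ρ_ (dual b ⊗ b)).hom ≫ (j b).inv := by
    simp only [pairing, id_tensorHom, tensorHom_id, assoc]
    exact lemA b a (dual b) (dual a) (j b).inv (j a).inv
  have hR' : pairing b a = ((dual b ⊗ dual a) ◁ (β_ a b).hom) ≫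
      tensorμ (dual b) (dual a) b a ≫ ((dual b ⊗ b) ◁ (j a).inv) ≫
        (ρ_ (dual b ⊗ b)).hom ≫ (j b).inv := by
    rw [← hR, ← MonoidalCategory.whiskerLeft_comp_assoc, SymmetricCategory.symmetry,
      MonoidalCategory.whiskerLeft_id, id_comp]
  rw [hL, hR']
  exact (lemC a b (dual a) (dual b) (j a).inv (j b).inv).symm

/-- In any symmetric Picard category, `κ_{a,b} ≫ (s_{a,b})^• = s_{a^•,b^•} ≫ κ_{b,a}`,
where `s` is the braiding. -/
theorem statement4 (a b : C) :
    kappa a b ≫ dualHom (β_ a b).hom = (β_ (dual a) (dual b)).hom ≫ kappa b a := by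
  apply whiskerRight_cancel (a ⊗ b)
  rw [← cancel_mono ((j (a ⊗ b)).inv)]
  have hd := dualHom_spec (β_ a b).hom
  -- (j (a⊗b)).inv = inv (dualHom β ⊗ inv β) ≫ (j (b⊗a)).inv
  have hinv : (j (a ⊗ b)).inv =
      (inv (dualHom (β_ a b).hom) ⊗ₘ (β_ a b).hom) ≫ (j (b ⊗ a)).inv := by
    rw [← cancel_epi (j (a ⊗ b)).hom, Iso.hom_inv_id, ← hd, assoc, MonoidalCategory.tensorHom_comp_tensorHom_assoc]
    simp
  calc (kappa a b ≫ dualHom (β_ a b).hom) ▷ (a ⊗ b) ≫ (j (a ⊗ b)).inv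
      = (kappa a b ▷ (a ⊗ b)) ≫ (dualHom (β_ a b).hom ▷ (a ⊗ b)) ≫
          (inv (dualHom (β_ a b).hom) ⊗ₘ (β_ a b).hom) ≫ (j (b ⊗ a)).inv := by
        rw [hinv]; simp
    _ = (kappa a b ▷ (a ⊗ b)) ≫ (dual (b ⊗ a) ◁ (β_ a b).hom) ≫ (j (b ⊗ a)).inv := by
        rw [MonoidalCategory.tensorHom_def]
        simp [← comp_whiskerRight_assoc]
    _ = ((dual a ⊗ dual b) ◁ (β_ a b).hom) ≫ (kappa a b ▷ (b ⊗ a)) ≫ (j (b ⊗ a)).inv := by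
        rw [← whisker_exchange_assoc]
    _ = ((dual a ⊗ dual b) ◁ (β_ a b).hom) ≫ pairing a b := by
        rw [← tensorHom_id, kappa_spec]
    _ = ((β_ (dual a) (dual b)).hom ▷ (a ⊗ b)) ≫ pairing b a := core a b
    _ = ((β_ (dual a) (dual b)).hom ≫ kappa b a) ▷ (a ⊗ b) ≫ (j (a ⊗ b)).inv := by
        rw [comp_whiskerRight, assoc, ← tensorHom_id (kappa b a), kappa_spec]
end SymmetricPicard
end

section
/- In any symmetric Picard category 𝒜, for all objects a, b, c the following two composites a^• ⊗ (b^• ⊗ c^•) ⟶ ((a ⊗ b) ⊗ c)^• are equal: (i) (𝟙_{a^•} ⊗ s_{b^•,c^•}) ≫ (𝟙_{a^•} ⊗ κ_{c,b}) ≫ s_{a^•,(b⊗c)^•} ≫ κ_{b⊗c,a} ≫ (α_{a,b,c})^•, and (ii) α_{a^•,b^•,c^•}⁻¹ ≫ (s_{a^•,b^•} ⊗ 𝟙_{c^•}) ≫ (κ_{b,a} ⊗ 𝟙_{c^•}) ≫ s_{(a⊗b)^•,c^•} ≫ κ_{c,a⊗b}, where s is the braiding, α_{a,b,c} : (a ⊗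 b) ⊗ c ⟶ a ⊗ (b ⊗ c) is the associator and (α_{a,b,c})^• : (a ⊗ (b ⊗ c))^• ⟶ ((a ⊗ b) ⊗ c)^• is its dual morphism. -/
open CategoryTheory Category MonoidalCategory

universe v u

namespace SymmetricPicard

variable {C : Type u} [Groupoid.{v} C] [MonoidalCategory C] [SymmetricCategory C]
  [SymmetricPicard C]

noncomputable def tensorREquiv (x : C) : C ≌ C :=
  CategoryTheory.Equivalence.mk (tensorRight x) (tensorRight (dual x))
    (NatIso.ofComponents (fun y =>
      (ρ_ y).symm ≪≫ whiskerLeftIso y (j x ≪≫ β_ (dual x) x) ≪≫ (α_ y x (dual x)).symm)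
      (by intro X Y f
          simp only [Functor.id_obj, Functor.comp_obj, Functor.flip_obj_obj, curriedTensor_obj_obj, Functor.id_map,
            Iso.trans_hom, Iso.symm_hom, whiskerLeftIso_hom, Functor.comp_map, Functor.flip_obj_map, curriedTensor_map_app,
            assoc, Iso.trans_assoc]
          rw [rightUnitor_inv_naturality_assoc, ← whisker_exchange_assoc,
            associator_inv_naturality_left]))
    (NatIso.ofComponents (fun y =>
      α_ y (dual x) x ≪≫ whiskerLeftIso y (j x).symm ≪≫ ρ_ y)
      (by intro X Y f
          simp only [Functor.comp_obj, Functor.flip_obj_obj, curriedTensor_obj_obj, Functor.id_obj, Functor.comp_map,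
            Functor.flip_obj_map, curriedTensor_map_app, Iso.trans_hom, whiskerLeftIso_hom, Iso.symm_hom, assoc,
            Functor.id_map]
          rw [associator_naturality_left_assoc, ← whisker_exchange_assoc,
            rightUnitor_naturality]))

lemma whiskerRight_inj (x : C) {y z : C} {f g : y ⟶ z} (h : f ▷ x = g ▷ x) : f = g :=
  (tensorREquiv x).functor.map_injective (by exact h)

lemma whiskerRight_surj (x : C) {y z : C} (h : y ⊗ x ⟶ z ⊗ x) : ∃ f : y ⟶ z, f ▷ x = h := by
  obtain ⟨f, hf⟩ := (tensorREquiv x).functor.map_surjective (X := y) (Y := z) h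
  exact ⟨f, by exact hf⟩

/-- whisker form of kappa spec -/
lemma kappa_whisker (a b : C) :
    kappa a b ▷ (b ⊗ a) ≫ (j (b ⊗ a)).inv = pairing a b := by
  rw [← tensorHom_id]; exact kappa_spec a b

/-- whisker form of dualHom spec: `dualHom f ▷ a = (dual b ◁ f) ≫ (j b).inv ≫ (j a).hom`. -/
lemma dualHom_whisker {a b : C} (f : a ⟶ b) :
    dualHom f ▷ a = (dual b ◁ f) ≫ (j b).inv ≫ (j a).hom := by
  have h := dualHom_spec f
  have : (dualHom f ⊗ₘ inv f) = (j b).inv ≫ (j a).hom := by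
    rw [← h]; simp
  calc dualHom f ▷ a = (dual b ◁ f) ≫ (dualHom f ⊗ₘ inv f) := by
        rw [MonoidalCategory.tensorHom_def, whisker_exchange_assoc, ← MonoidalCategory.whiskerLeft_comp]
        simp
    _ = _ := by rw [this]


lemma pairing_eq (a b : C) : pairing a b =
    (α_ (dual a) (dual b) (b ⊗ a)).hom ≫ (dual a ◁ (α_ (dual b) b a).inv) ≫
    (dual a ◁ ((j b).inv ▷ a)) ≫ (dual a ◁ (λ_ a).hom) ≫ (j a).inv := by
  simp [pairing, id_tensorHom, tensorHom_id]

lemma lhs_norm (a b c : C) :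
    ((𝟙 (dual a) ⊗ₘ (β_ (dual b) (dual c)).hom) ≫ (𝟙 (dual a) ⊗ₘ kappa c b) ≫
        (β_ (dual a) (dual (b ⊗ c))).hom ≫ kappa (b ⊗ c) a ≫ dualHom (α_ a b c).hom)
      ▷ ((a ⊗ b) ⊗ c) ≫ (j ((a ⊗ b) ⊗ c)).inv =
    ((dual a ⊗ dual b ⊗ dual c) ◁ (α_ a b c).hom) ≫
    ((dual a ◁ (β_ (dual b) (dual c)).hom) ≫ (β_ (dual a) (dual c ⊗ dual b)).hom)
      ▷ (a ⊗ b ⊗ c) ≫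
    (α_ (dual c ⊗ dual b) (dual a) (a ⊗ b ⊗ c)).hom ≫
    ((dual c ⊗ dual b) ◁ ((α_ (dual a) a (b ⊗ c)).inv ≫ ((j a).inv ▷ (b ⊗ c)) ≫
      (λ_ (b ⊗ c)).hom)) ≫
    pairing c b := by
  simp only [comp_whiskerRight, assoc, id_tensorHom]
  rw [dualHom_whisker]
  simp only [assoc, Iso.hom_inv_id, comp_id]
  rw [← whisker_exchange_assoc, ← whisker_exchange_assoc, ← whisker_exchange_assoc,
    ← whisker_exchange_assoc, kappa_whisker, pairing_eq]
  slice_lhs 3 4 =>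
    rw [← comp_whiskerRight, BraidedCategory.braiding_naturality_right, comp_whiskerRight]
  simp only [assoc]
  rw [associator_naturality_left_assoc, ← whisker_exchange_assoc, ← whisker_exchange_assoc,
    ← whisker_exchange_assoc, kappa_whisker]
  simp only [MonoidalCategory.whiskerLeft_comp, assoc]


lemma rhs_norm (a b c : C) :
    ((α_ (dual a) (dual b) (dual c)).inv ≫ ((β_ (dual a) (dual b)).hom ⊗ₘ 𝟙 (dual c)) ≫
        (kappa b a ⊗ₘ 𝟙 (dual c)) ≫ (β_ (dual (a ⊗ b)) (dual c)).hom ≫ kappa c (a ⊗ b))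
      ▷ ((a ⊗ b) ⊗ c) ≫ (j ((a ⊗ b) ⊗ c)).inv =
    (α_ (dual a) (dual b) (dual c)).inv ▷ ((a ⊗ b) ⊗ c) ≫
    ((β_ (dual a) (dual b)).hom ▷ dual c) ▷ ((a ⊗ b) ⊗ c) ≫
    (β_ (dual b ⊗ dual a) (dual c)).hom ▷ ((a ⊗ b) ⊗ c) ≫
    (α_ (dual c) (dual b ⊗ dual a) ((a ⊗ b) ⊗ c)).hom ≫
    (dual c ◁ ((α_ (dual b ⊗ dual a) (a ⊗ b) c).inv ≫ (pairing b a ▷ c) ≫ (λ_ c).hom)) ≫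
    (j c).inv := by
  simp only [comp_whiskerRight, assoc, tensorHom_id]
  rw [kappa_whisker, pairing_eq]
  slice_lhs 3 4 =>
    rw [← comp_whiskerRight, BraidedCategory.braiding_naturality_left, comp_whiskerRight]
  simp only [assoc]
  rw [associator_naturality_middle_assoc]
  slice_lhs 5 6 =>
    rw [← MonoidalCategory.whiskerLeft_comp, associator_inv_naturality_left,
      MonoidalCategory.whiskerLeft_comp]
  slice_lhs 6 7 =>
    rw [← MonoidalCategory.whiskerLeft_comp, ← comp_whiskerRight, kappa_whisker]
  simp only [MonoidalCategory.whiskerLeft_comp, assoc]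


lemma braid3 (x y z : C) :
    (x ◁ (β_ y z).hom) ≫ (β_ x (z ⊗ y)).hom ≫ (α_ z y x).hom =
    (α_ x y z).inv ≫ ((β_ x y).hom ▷ z) ≫ (β_ (y ⊗ x) z).hom := by
  rw [BraidedCategory.braiding_tensor_right_hom, BraidedCategory.braiding_tensor_left_hom]
  simp only [assoc, Iso.inv_hom_id, comp_id]
  rw [BraidedCategory.yang_baxter]

lemma braid3' (x y z : C) :
    (x ◁ (β_ y z).hom ≫ (β_ x (z ⊗ y)).hom) ≫ (α_ z y x).hom =
    (α_ x y z).inv ≫ ((β_ x y).hom ▷ z) ≫ (β_ (y ⊗ x) z).hom := by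
  rw [assoc, braid3]

lemma eval_eq (a b c : C) :
    (α_ (dual c ⊗ dual b) (dual a) (a ⊗ b ⊗ c)).hom ≫
      ((dual c ⊗ dual b) ◁ ((α_ (dual a) a (b ⊗ c)).inv ≫ ((j a).inv ▷ (b ⊗ c)) ≫
        (λ_ (b ⊗ c)).hom)) ≫ pairing c b =
    (α_ (dual c) (dual b) (dual a)).hom ▷ (a ⊗ b ⊗ c) ≫
      ((dual c ⊗ dual b ⊗ dual a) ◁ (α_ a b c).inv) ≫
      (α_ (dual c) (dual b ⊗ dual a) ((a ⊗ b) ⊗ c)).hom ≫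
      (dual c ◁ ((α_ (dual b ⊗ dual a) (a ⊗ b) c).inv ≫ (pairing b a ▷ c) ≫ (λ_ c).hom)) ≫
      (j c).inv := by
  simp only [pairing_eq, MonoidalCategory.whiskerLeft_comp, comp_whiskerRight, assoc]
  coherence


/-- In any symmetric Picard category, the two canonical composites
`a^• ⊗ (b^• ⊗ c^•) ⟶ ((a ⊗ b) ⊗ c)^•` built from the braiding `s`, the canonical arrows `κ`
and the (dual of the) associator, are equal. -/
theorem statement5 (a b c : C) :
    (𝟙 (dual a) ⊗ₘ (β_ (dual b) (dual c)).hom) ≫ (𝟙 (dual a) ⊗ₘ kappa c b) ≫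
        (β_ (dual a) (dual (b ⊗ c))).hom ≫ kappa (b ⊗ c) a ≫ dualHom (α_ a b c).hom =
      (α_ (dual a) (dual b) (dual c)).inv ≫ ((β_ (dual a) (dual b)).hom ⊗ₘ 𝟙 (dual c)) ≫
        (kappa b a ⊗ₘ 𝟙 (dual c)) ≫ (β_ (dual (a ⊗ b)) (dual c)).hom ≫ kappa c (a ⊗ b) := by
  apply whiskerRight_inj ((a ⊗ b) ⊗ c)
  rw [← cancel_mono (j ((a ⊗ b) ⊗ c)).inv, lhs_norm, rhs_norm, eval_eq]
  rw [whisker_exchange_assoc, whisker_exchange_assoc]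
  simp only [← MonoidalCategory.whiskerLeft_comp_assoc, Iso.hom_inv_id,
    MonoidalCategory.whiskerLeft_id, id_comp]
  rw [← comp_whiskerRight_assoc, braid3']
  simp only [comp_whiskerRight, assoc]

end SymmetricPicard
end

section
/- Let F, G : 𝒜 ⥤ ℬ be lax monoidal functors between symmetric Picard categories and let σ : F ⟶ G be a monoidal natural transformation. Then for every object a of 𝒜 the square (σ_a)^• ≫ c^F_a ≫ σ_{a^•} = c^G_a commutes, as morphisms (Ga)^• ⟶ G(a^•), where (σ_a)^• : (Ga)^• ⟶ (Fa)^• is the dual of the component σ_a. -/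
open CategoryTheory Category MonoidalCategory

universe v u

open CategoryTheory Category MonoidalCategory



section
variable {C : Type u} [Category.{v} C] [MonoidalCategory C]

lemma recover {x y z z' : C} (e : 𝟙_ C ≅ z ⊗ z') (f : x ⟶ y) :
    f = (ρ_ x).inv ≫ (x ◁ e.hom) ≫ (α_ x z z').inv ≫ ((f ▷ z) ▷ z') ≫
        (α_ y z z').hom ≫ (y ◁ e.inv) ≫ (ρ_ y).hom := by
  have h := whisker_exchange f e.hom
  calc f = (ρ_ x).inv ≫ (x ◁ e.hom ≫ f ▷ (z ⊗ z')) ≫ (y ◁ e.inv) ≫ (ρ_ y).hom := by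
        rw [h]; simp
    _ = _ := by rw [whiskerRight_tensor]; simp only [assoc]

lemma whiskerRight_cancel' {x y z z' : C} (e : 𝟙_ C ≅ z ⊗ z') {f g : x ⟶ y}
    (h : f ▷ z = g ▷ z) : f = g := by
  rw [recover e f, recover e g, h]

lemma whiskerRight_full {x y z z' : C} (e : 𝟙_ C ≅ z ⊗ z') (e' : 𝟙_ C ≅ z' ⊗ z)
    (m : x ⊗ z ⟶ y ⊗ z) : ∃ g : x ⟶ y, g ▷ z = m := by
  refine ⟨(ρ_ x).inv ≫ (x ◁ e.hom) ≫ (α_ x z z').inv ≫ (m ▷ z') ≫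
        (α_ y z z').hom ≫ (y ◁ e.inv) ≫ (ρ_ y).hom, ?_⟩
  set g := (ρ_ x).inv ≫ (x ◁ e.hom) ≫ (α_ x z z').inv ≫ (m ▷ z') ≫
        (α_ y z z').hom ≫ (y ◁ e.inv) ≫ (ρ_ y).hom with hg
  apply whiskerRight_cancel' e'
  have h2 : g ▷ (z ⊗ z') = (α_ x z z').inv ≫ m ▷ z' ≫ (α_ y z z').hom := by
    rw [← cancel_epi (x ◁ e.hom), whisker_exchange g e.hom, hg]
    simp
  have h3 : (α_ x z z').inv ≫ g ▷ z ▷ z' ≫ (α_ y z z').hom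
      = (α_ x z z').inv ≫ m ▷ z' ≫ (α_ y z z').hom :=
    (whiskerRight_tensor g z z').symm.trans h2
  simp only [Iso.cancel_iso_inv_left] at h3
  exact (cancel_mono _).1 h3

end

namespace SymmetricPicard

variable {C : Type u} [Groupoid.{v} C] [MonoidalCategory C] [SymmetricCategory C]
  [SymmetricPicard C]

open Functor.LaxMonoidal

universe v₁ u₁ v₂ u₂

/-- Let `F, G` be lax monoidal functors between symmetric Picard categories and
`σ : F ⟶ G` a monoidal natural transformation (i.e. compatible with the units and with the
tensorators).  If `cF` and `cG` are the canonical comparison morphisms of `F` and `G` at an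
object `a` — the unique morphisms satisfying the respective defining equations — then
`(σ_a)^• ≫ cF ≫ σ_{a^•} = cG`. -/
theorem statement10 {A : Type u₁} [Groupoid.{v₁} A] [MonoidalCategory A]
    [SymmetricCategory A] [SymmetricPicard A]
    {B : Type u₂} [Groupoid.{v₂} B] [MonoidalCategory B]
    [SymmetricCategory B] [SymmetricPicard B]
    (F G : A ⥤ B) [F.LaxMonoidal] [G.LaxMonoidal] (σ : F ⟶ G)
    (hσ_unit : ε F ≫ σ.app (𝟙_ A) = ε G)
    (hσ_tensor : ∀ a b : A,
        (σ.app a ⊗ₘ σ.app b) ≫ μ G a b = μ F a b ≫ σ.app (a ⊗ b))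
    (a : A)
    (cF : dual (F.obj a) ⟶ F.obj (dual a))
    (cG : dual (G.obj a) ⟶ G.obj (dual a))
    (hF : (j (F.obj a)).hom ≫ (cF ⊗ₘ 𝟙 (F.obj a)) ≫ μ F (dual a) a
        = ε F ≫ F.map (j a).hom)
    (hG : (j (G.obj a)).hom ≫ (cG ⊗ₘ 𝟙 (G.obj a)) ≫ μ G (dual a) a
        = ε G ≫ G.map (j a).hom) :
    dualHom (σ.app a) ≫ cF ≫ σ.app (dual a) = cG := by
  classical
  -- an iso 𝟙 ≅ z ⊗ dual z
  have mke : ∀ z : B, 𝟙_ B ≅ z ⊗ dual z := fun z => (j z) ≪≫ (β_ (dual z) z)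
  -- the defining property of dualHom (σ.app a)
  have hspec : (j (G.obj a)).hom ≫ (dualHom (σ.app a) ⊗ₘ inv (σ.app a)) = (j (F.obj a)).hom := by
    have hex : ∃ g : dual (G.obj a) ⟶ dual (F.obj a),
        (j (G.obj a)).hom ≫ (g ⊗ₘ inv (σ.app a)) = (j (F.obj a)).hom := by
      obtain ⟨g, hg⟩ := whiskerRight_full (mke (G.obj a)) (j (G.obj a))
        ((j (G.obj a)).inv ≫ (j (F.obj a)).hom ≫ (dual (F.obj a) ◁ σ.app a))
      refine ⟨g, ?_⟩
      rw [MonoidalCategory.tensorHom_def, hg]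
      simp [← MonoidalCategory.whiskerLeft_comp]
    exact Classical.epsilon_spec hex
  -- key computation
  have key : (j (G.obj a)).hom ≫
        ((dualHom (σ.app a) ≫ cF ≫ σ.app (dual a)) ⊗ₘ 𝟙 (G.obj a)) ≫ μ G (dual a) a
      = (j (G.obj a)).hom ≫ (cG ⊗ₘ 𝟙 (G.obj a)) ≫ μ G (dual a) a := by
    have decomp : (dualHom (σ.app a) ≫ cF ≫ σ.app (dual a)) ⊗ₘ 𝟙 (G.obj a)
        = (dualHom (σ.app a) ⊗ₘ inv (σ.app a)) ≫ (cF ⊗ₘ 𝟙 (F.obj a)) ≫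
          (σ.app (dual a) ⊗ₘ σ.app a) := by
      simp only [tensorHom_comp_tensorHom, id_comp, IsIso.inv_hom_id]
    calc (j (G.obj a)).hom ≫
          ((dualHom (σ.app a) ≫ cF ≫ σ.app (dual a)) ⊗ₘ 𝟙 (G.obj a)) ≫ μ G (dual a) a
        = ((j (G.obj a)).hom ≫ (dualHom (σ.app a) ⊗ₘ inv (σ.app a))) ≫ (cF ⊗ₘ 𝟙 (F.obj a)) ≫
            ((σ.app (dual a) ⊗ₘ σ.app a) ≫ μ G (dual a) a) := by
          rw [decomp]; simp only [assoc]
      _ = (j (F.obj a)).hom ≫ (cF ⊗ₘ 𝟙 (F.obj a)) ≫ μ F (dual a) a ≫ σ.app (dual a ⊗ a) := by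
          rw [hspec, hσ_tensor]
      _ = ((j (F.obj a)).hom ≫ (cF ⊗ₘ 𝟙 (F.obj a)) ≫ μ F (dual a) a) ≫ σ.app (dual a ⊗ a) := by
          simp only [assoc]
      _ = ε F ≫ F.map (j a).hom ≫ σ.app (dual a ⊗ a) := by rw [hF]; simp only [assoc]
      _ = ε F ≫ σ.app (𝟙_ A) ≫ G.map (j a).hom := by rw [σ.naturality]
      _ = ε G ≫ G.map (j a).hom := by rw [← assoc, hσ_unit]
      _ = (j (G.obj a)).hom ≫ (cG ⊗ₘ 𝟙 (G.obj a)) ≫ μ G (dual a) a := hG.symm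
  rw [cancel_epi, cancel_mono, tensorHom_id, tensorHom_id] at key
  exact whiskerRight_cancel' (mke (G.obj a)) key

end SymmetricPicard
end

section
/- Let 𝒜, ℬ be symmetric Picard categories, F : 𝒜 ⥤ ℬ a functor, and F²_{x,y} : Fx ⊗ Fy ⟶ F(x ⊗ y) a family of morphisms natural in x and y and satisfying the associativity coherence: for all objects a, b, c, (F²_{a,b} ⊗ 𝟙_{Fc}) ≫ F²_{a⊗b,c} ≫ F(α_{a,b,c}) = α_{Fa,Fb,Fc} ≫ (𝟙_{Fa} ⊗ F²_{b,c}) ≫ F²_{a,b⊗c}, with α the associator. Then there exists a unique morphism ε : 𝟙 ⟶ F𝟙 such that (F, ε, F²) is a lax monoidal functor, i.e. such that the two unit coherence axioms hold. -/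
open CategoryTheory Category MonoidalCategory

universe v u

namespace SymmetricPicard

universe v₁ u₁ v₂ u₂

section Aux
variable {C : Type*} [Category C] [MonoidalCategory C]

theorem sandwich_inj {a b a' b' : C} (p : a' ≅ a) (q : b ≅ b') {u v : a ⟶ b}
    (h : p.hom ≫ u ≫ q.hom = p.hom ≫ v ≫ q.hom) : u = v := by
  simpa using congrArg (fun t => p.inv ≫ t ≫ q.inv) h

theorem conj_unit {y z w : C} (k : 𝟙_ C ≅ w) (g : y ⟶ z) :
    (ρ_ y).inv ≫ (𝟙 y ⊗ₘ k.hom) ≫ (g ⊗ₘ 𝟙 w) ≫ (𝟙 z ⊗ₘ k.inv) ≫ (ρ_ z).hom = g := by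
  rw [tensorHom_comp_tensorHom_assoc, tensorHom_comp_tensorHom_assoc]
  simp

theorem conj_unit_left {y z w : C} (k : 𝟙_ C ≅ w) (g : y ⟶ z) :
    (λ_ y).inv ≫ (k.hom ⊗ₘ 𝟙 y) ≫ (𝟙 w ⊗ₘ g) ≫ (k.inv ⊗ₘ 𝟙 z) ≫ (λ_ z).hom = g := by
  rw [tensorHom_comp_tensorHom_assoc, tensorHom_comp_tensorHom_assoc]
  simp

theorem tensor_id_assoc {y z : C} (g : y ⟶ z) (x d : C) :
    (α_ y x d).inv ≫ ((g ⊗ₘ 𝟙 x) ⊗ₘ 𝟙 d) ≫ (α_ z x d).hom = g ⊗ₘ 𝟙 (x ⊗ d) := by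
  rw [← associator_inv_naturality_assoc]
  simp [id_tensorHom_id]

theorem tensor_id_assoc' {y z : C} (g : y ⟶ z) (d x : C) :
    (α_ d x y).hom ≫ (𝟙 d ⊗ₘ (𝟙 x ⊗ₘ g)) ≫ (α_ d x z).inv = 𝟙 (d ⊗ x) ⊗ₘ g := by
  simp

theorem factA1 (a : C) : (α_ (𝟙_ C) (𝟙_ C) a).hom ≫ (𝟙 (𝟙_ C) ⊗ₘ (λ_ a).hom)
    = (λ_ (𝟙_ C)).hom ⊗ₘ 𝟙 a := by
  rw [id_tensorHom, tensorHom_id, unitors_equal, triangle]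

theorem factA2 (a : C) : (α_ a (𝟙_ C) (𝟙_ C)).hom ≫ (𝟙 a ⊗ₘ (ρ_ (𝟙_ C)).hom)
    = (ρ_ a).hom ⊗ₘ 𝟙 (𝟙_ C) := by
  rw [id_tensorHom, tensorHom_id, ← unitors_equal, triangle]

end Aux

section Cancel
variable {C : Type u} [Groupoid.{v} C] [MonoidalCategory C] [SymmetricCategory C]
  [SymmetricPicard C]

theorem rcancel (x : C) {y z : C} {f g : y ⟶ z} (h : f ⊗ₘ 𝟙 x = g ⊗ₘ 𝟙 x) : f = g := by
  set d := dual x with hd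
  have k : 𝟙_ C ≅ x ⊗ d := j x ≪≫ β_ d x
  have h2 : f ⊗ₘ 𝟙 (x ⊗ d) = g ⊗ₘ 𝟙 (x ⊗ d) := by
    rw [← tensor_id_assoc, ← tensor_id_assoc, h]
  rw [← conj_unit k f, ← conj_unit k g, h2]

theorem lcancel (x : C) {y z : C} {f g : y ⟶ z} (h : 𝟙 x ⊗ₘ f = 𝟙 x ⊗ₘ g) : f = g := by
  set d := dual x with hd
  have k : 𝟙_ C ≅ d ⊗ x := j x
  have h2 : 𝟙 (d ⊗ x) ⊗ₘ f = 𝟙 (d ⊗ x) ⊗ₘ g := by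
    rw [← tensor_id_assoc', ← tensor_id_assoc', h]
  rw [← conj_unit_left k f, ← conj_unit_left k g, h2]

theorem rdiv (x : C) {y z : C} (f : y ⊗ x ⟶ z ⊗ x) : ∃ g : y ⟶ z, g ⊗ₘ 𝟙 x = f := by
  set d := dual x with hd
  set k : 𝟙_ C ≅ x ⊗ d := j x ≪≫ β_ d x with hk
  set g := (ρ_ y).inv ≫ (𝟙 y ⊗ₘ k.hom) ≫ (α_ y x d).inv ≫ (f ⊗ₘ 𝟙 d) ≫ (α_ z x d).hom ≫
      (𝟙 z ⊗ₘ k.inv) ≫ (ρ_ z).hom with hgdef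
  refine ⟨g, rcancel d ?_⟩
  have h2 := conj_unit k g
  rw [← tensor_id_assoc g x d] at h2
  conv_rhs at h2 => rw [hgdef]
  apply sandwich_inj (asIso ((ρ_ y).inv ≫ (𝟙 y ⊗ₘ k.hom) ≫ (α_ y x d).inv))
    (asIso ((α_ z x d).hom ≫ (𝟙 z ⊗ₘ k.inv) ≫ (ρ_ z).hom))
  simpa only [asIso_hom, assoc] using h2

theorem ldiv (x : C) {y z : C} (f : x ⊗ y ⟶ x ⊗ z) : ∃ g : y ⟶ z, 𝟙 x ⊗ₘ g = f := by
  set d := dual x with hd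
  set k : 𝟙_ C ≅ d ⊗ x := j x with hk
  set g := (λ_ y).inv ≫ (k.hom ⊗ₘ 𝟙 y) ≫ (α_ d x y).hom ≫ (𝟙 d ⊗ₘ f) ≫ (α_ d x z).inv ≫
      (k.inv ⊗ₘ 𝟙 z) ≫ (λ_ z).hom with hgdef
  refine ⟨g, lcancel d ?_⟩
  have h2 := conj_unit_left k g
  rw [← tensor_id_assoc' g d x] at h2
  conv_rhs at h2 => rw [hgdef]
  apply sandwich_inj (asIso ((λ_ y).inv ≫ (k.hom ⊗ₘ 𝟙 y) ≫ (α_ d x y).hom))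
    (asIso ((α_ d x z).inv ≫ (k.inv ⊗ₘ 𝟙 z) ≫ (λ_ z).hom))
  simpa only [asIso_hom, assoc] using h2

end Cancel

set_option maxHeartbeats 1000000 in
/-- Given a functor `F` between symmetric Picard categories and a natural family
`F² x y : Fx ⊗ Fy ⟶ F(x ⊗ y)` satisfying the associativity coherence, there is a unique
morphism `ε : 𝟙 ⟶ F𝟙` such that `(F, ε, F²)` is a lax monoidal functor, i.e. such that the
two unit coherence axioms hold. -/
theorem statement12 {A : Type u₁} [Groupoid.{v₁} A] [MonoidalCategory A]
    [SymmetricCategory A] [SymmetricPicard A]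
    {B : Type u₂} [Groupoid.{v₂} B] [MonoidalCategory B]
    [SymmetricCategory B] [SymmetricPicard B]
    (F : A ⥤ B) (F2 : ∀ x y : A, F.obj x ⊗ F.obj y ⟶ F.obj (x ⊗ y))
    (hnat : ∀ {x x' y y' : A} (f : x ⟶ x') (g : y ⟶ y'),
        (F.map f ⊗ₘ F.map g) ≫ F2 x' y' = F2 x y ≫ F.map (f ⊗ₘ g))
    (hassoc : ∀ a b c : A,
        (F2 a b ⊗ₘ 𝟙 (F.obj c)) ≫ F2 (a ⊗ b) c ≫ F.map (α_ a b c).hom =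
          (α_ (F.obj a) (F.obj b) (F.obj c)).hom ≫ (𝟙 (F.obj a) ⊗ₘ F2 b c) ≫
            F2 a (b ⊗ c)) :
    ∃! ε : 𝟙_ B ⟶ F.obj (𝟙_ A),
      (∀ a : A, (λ_ (F.obj a)).hom =
          (ε ⊗ₘ 𝟙 (F.obj a)) ≫ F2 (𝟙_ A) a ≫ F.map (λ_ a).hom) ∧
      (∀ a : A, (ρ_ (F.obj a)).hom =
          (𝟙 (F.obj a) ⊗ₘ ε) ≫ F2 a (𝟙_ A) ≫ F.map (ρ_ a).hom) := by
  obtain ⟨ε, hε⟩ := rdiv (F.obj (𝟙_ A))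
    ((λ_ (F.obj (𝟙_ A))).hom ≫ inv (F2 (𝟙_ A) (𝟙_ A) ≫ F.map (λ_ (𝟙_ A)).hom))
  have E1 : (ε ⊗ₘ 𝟙 (F.obj (𝟙_ A))) ≫ F2 (𝟙_ A) (𝟙_ A) ≫ F.map (λ_ (𝟙_ A)).hom
      = (λ_ (F.obj (𝟙_ A))).hom := by
    rw [hε, assoc, IsIso.inv_hom_id, comp_id]
  obtain ⟨ε', hε'⟩ := ldiv (F.obj (𝟙_ A))
    ((ρ_ (F.obj (𝟙_ A))).hom ≫ inv (F2 (𝟙_ A) (𝟙_ A) ≫ F.map (λ_ (𝟙_ A)).hom))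
  have E2' : (𝟙 (F.obj (𝟙_ A)) ⊗ₘ ε') ≫ F2 (𝟙_ A) (𝟙_ A) ≫ F.map (λ_ (𝟙_ A)).hom
      = (ρ_ (F.obj (𝟙_ A))).hom := by
    rw [hε', assoc, IsIso.inv_hom_id, comp_id]
  -- the two candidate units agree
  have hee : ε' = ε := by
    have c1 : (ε ⊗ₘ ε') ≫ F2 (𝟙_ A) (𝟙_ A) ≫ F.map (λ_ (𝟙_ A)).hom
        = (ρ_ (𝟙_ B)).hom ≫ ε := by
      have hsplit : (ε ⊗ₘ ε') = (ε ⊗ₘ 𝟙 (𝟙_ B)) ≫ (𝟙 (F.obj (𝟙_ A)) ⊗ₘ ε') := by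
        rw [tensorHom_comp_tensorHom]; simp
      rw [hsplit, assoc, E2', tensorHom_id, rightUnitor_naturality]
    have c2 : (ε ⊗ₘ ε') ≫ F2 (𝟙_ A) (𝟙_ A) ≫ F.map (λ_ (𝟙_ A)).hom
        = (λ_ (𝟙_ B)).hom ≫ ε' := by
      have hsplit : (ε ⊗ₘ ε') = (𝟙 (𝟙_ B) ⊗ₘ ε') ≫ (ε ⊗ₘ 𝟙 (F.obj (𝟙_ A))) := by
        rw [tensorHom_comp_tensorHom]; simp
      rw [hsplit, assoc, E1, id_tensorHom, leftUnitor_naturality]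
    have c3 : (ρ_ (𝟙_ B)).hom ≫ ε' = (ρ_ (𝟙_ B)).hom ≫ ε := by
      rw [← unitors_equal, ← c2, c1, unitors_equal]
    exact (cancel_epi (ρ_ (𝟙_ B)).hom).mp c3
  have E2 : (𝟙 (F.obj (𝟙_ A)) ⊗ₘ ε) ≫ F2 (𝟙_ A) (𝟙_ A) ≫ F.map (λ_ (𝟙_ A)).hom
      = (ρ_ (F.obj (𝟙_ A))).hom := by rw [← hee]; exact E2'
  -- left unit axiom for every object
  have left : ∀ a : A, (λ_ (F.obj a)).hom =
      (ε ⊗ₘ 𝟙 (F.obj a)) ≫ F2 (𝟙_ A) a ≫ F.map (λ_ a).hom := by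
    intro a
    have nat1 := hnat (λ_ (𝟙_ A)).hom (𝟙 a)
    rw [F.map_id] at nat1
    have nat2 := hnat (𝟙 (𝟙_ A)) (λ_ a).hom
    rw [F.map_id] at nat2
    have TL : ((ε ⊗ₘ 𝟙 (F.obj (𝟙_ A))) ⊗ₘ 𝟙 (F.obj a)) ≫
          (F2 (𝟙_ A) (𝟙_ A) ⊗ₘ 𝟙 (F.obj a)) ≫ F2 (𝟙_ A ⊗ 𝟙_ A) a ≫
          F.map (α_ (𝟙_ A) (𝟙_ A) a).hom ≫ F.map (𝟙 (𝟙_ A) ⊗ₘ (λ_ a).hom)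
        = ((λ_ (F.obj (𝟙_ A))).hom ⊗ₘ 𝟙 (F.obj a)) ≫ F2 (𝟙_ A) a := by
      rw [← F.map_comp, factA1, ← nat1]
      rw [tensorHom_comp_tensorHom_assoc, tensorHom_comp_tensorHom_assoc, comp_id, assoc, E1]
      simp
    have TR : ((ε ⊗ₘ 𝟙 (F.obj (𝟙_ A))) ⊗ₘ 𝟙 (F.obj a)) ≫
          (α_ (F.obj (𝟙_ A)) (F.obj (𝟙_ A)) (F.obj a)).hom ≫
          (𝟙 (F.obj (𝟙_ A)) ⊗ₘ F2 (𝟙_ A) a) ≫ F2 (𝟙_ A) (𝟙_ A ⊗ a) ≫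
          F.map (𝟙 (𝟙_ A) ⊗ₘ (λ_ a).hom)
        = (α_ (𝟙_ B) (F.obj (𝟙_ A)) (F.obj a)).hom ≫
          (𝟙 (𝟙_ B) ⊗ₘ (F2 (𝟙_ A) a ≫ F.map (λ_ a).hom)) ≫
          (ε ⊗ₘ 𝟙 (F.obj a)) ≫ F2 (𝟙_ A) a := by
      rw [← nat2]
      rw [associator_naturality_assoc]
      rw [id_tensorHom_id]
      have hcomb : (𝟙 (F.obj (𝟙_ A)) ⊗ₘ F2 (𝟙_ A) a) ≫
            (𝟙 (F.obj (𝟙_ A)) ⊗ₘ F.map (λ_ a).hom)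
          = 𝟙 (F.obj (𝟙_ A)) ⊗ₘ (F2 (𝟙_ A) a ≫ F.map (λ_ a).hom) := by
        rw [tensorHom_comp_tensorHom, comp_id]
      rw [← assoc (𝟙 _ ⊗ₘ F2 (𝟙_ A) a), hcomb]
      have hinter : (ε ⊗ₘ 𝟙 (F.obj (𝟙_ A) ⊗ F.obj a)) ≫
            (𝟙 (F.obj (𝟙_ A)) ⊗ₘ (F2 (𝟙_ A) a ≫ F.map (λ_ a).hom))
          = (𝟙 (𝟙_ B) ⊗ₘ (F2 (𝟙_ A) a ≫ F.map (λ_ a).hom)) ≫ (ε ⊗ₘ 𝟙 (F.obj a)) := by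
        rw [tensorHom_comp_tensorHom, tensorHom_comp_tensorHom]; simp
      rw [← assoc (ε ⊗ₘ 𝟙 _), hinter]
      simp only [assoc]
    have hA := congrArg
      (fun t => ((ε ⊗ₘ 𝟙 (F.obj (𝟙_ A))) ⊗ₘ 𝟙 (F.obj a)) ≫ t ≫
        F.map (𝟙 (𝟙_ A) ⊗ₘ (λ_ a).hom)) (hassoc (𝟙_ A) (𝟙_ A) a)
    simp only [assoc] at hA
    have hmain := TL.symm.trans (hA.trans TR)
    have key : (𝟙 (𝟙_ B) ⊗ₘ (F2 (𝟙_ A) a ≫ F.map (λ_ a).hom)) ≫ (ε ⊗ₘ 𝟙 (F.obj a))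
        = (λ_ (F.obj (𝟙_ A) ⊗ F.obj a)).hom := by
      rw [← cancel_mono (F2 (𝟙_ A) a)]
      rw [leftUnitor_tensor_hom]
      simp only [assoc]
      rw [← tensorHom_id (λ_ (F.obj (𝟙_ A))).hom, hmain]
      simp
    have hfinal : (ε ⊗ₘ 𝟙 (F.obj a)) = inv (𝟙 (𝟙_ B) ⊗ₘ (F2 (𝟙_ A) a ≫ F.map (λ_ a).hom))
        ≫ (λ_ (F.obj (𝟙_ A) ⊗ F.obj a)).hom := by
      rw [← key, IsIso.inv_hom_id_assoc]
    rw [← assoc, hfinal]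
    simp only [assoc]
    have hln := leftUnitor_naturality (F2 (𝟙_ A) a ≫ F.map (λ_ a).hom)
    rw [← id_tensorHom] at hln
    rw [← hln, IsIso.inv_hom_id_assoc]
  -- right unit axiom for every object
  have right : ∀ a : A, (ρ_ (F.obj a)).hom =
      (𝟙 (F.obj a) ⊗ₘ ε) ≫ F2 a (𝟙_ A) ≫ F.map (ρ_ a).hom := by
    intro a
    have nat3 := hnat (ρ_ a).hom (𝟙 (𝟙_ A))
    rw [F.map_id] at nat3
    have nat4 := hnat (𝟙 a) (ρ_ (𝟙_ A)).hom
    rw [F.map_id] at nat4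
    have TL : (𝟙 (F.obj a ⊗ F.obj (𝟙_ A)) ⊗ₘ ε) ≫
          (F2 a (𝟙_ A) ⊗ₘ 𝟙 (F.obj (𝟙_ A))) ≫ F2 (a ⊗ 𝟙_ A) (𝟙_ A) ≫
          F.map (α_ a (𝟙_ A) (𝟙_ A)).hom ≫ F.map (𝟙 a ⊗ₘ (ρ_ (𝟙_ A)).hom)
        = ((F2 a (𝟙_ A) ≫ F.map (ρ_ a).hom) ⊗ₘ 𝟙 (𝟙_ B)) ≫
          (𝟙 (F.obj a) ⊗ₘ ε) ≫ F2 a (𝟙_ A) := by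
      rw [← F.map_comp, factA2, ← nat3]
      have hcomb : (F2 a (𝟙_ A) ⊗ₘ 𝟙 (F.obj (𝟙_ A))) ≫
            (F.map (ρ_ a).hom ⊗ₘ 𝟙 (F.obj (𝟙_ A)))
          = (F2 a (𝟙_ A) ≫ F.map (ρ_ a).hom) ⊗ₘ 𝟙 (F.obj (𝟙_ A)) := by
        rw [tensorHom_comp_tensorHom, comp_id]
      rw [← assoc (F2 a (𝟙_ A) ⊗ₘ 𝟙 _), hcomb]
      have hinter : (𝟙 (F.obj a ⊗ F.obj (𝟙_ A)) ⊗ₘ ε) ≫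
            ((F2 a (𝟙_ A) ≫ F.map (ρ_ a).hom) ⊗ₘ 𝟙 (F.obj (𝟙_ A)))
          = ((F2 a (𝟙_ A) ≫ F.map (ρ_ a).hom) ⊗ₘ 𝟙 (𝟙_ B)) ≫ (𝟙 (F.obj a) ⊗ₘ ε) := by
        rw [tensorHom_comp_tensorHom, tensorHom_comp_tensorHom]; simp
      rw [← assoc (𝟙 _ ⊗ₘ ε), hinter]
      simp only [assoc]
    have TR : (𝟙 (F.obj a ⊗ F.obj (𝟙_ A)) ⊗ₘ ε) ≫
          (α_ (F.obj a) (F.obj (𝟙_ A)) (F.obj (𝟙_ A))).hom ≫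
          (𝟙 (F.obj a) ⊗ₘ F2 (𝟙_ A) (𝟙_ A)) ≫ F2 a (𝟙_ A ⊗ 𝟙_ A) ≫
          F.map (𝟙 a ⊗ₘ (ρ_ (𝟙_ A)).hom)
        = (ρ_ (F.obj a ⊗ F.obj (𝟙_ A))).hom ≫ F2 a (𝟙_ A) := by
      rw [← nat4]
      have hnatα := associator_naturality (𝟙 (F.obj a)) (𝟙 (F.obj (𝟙_ A))) ε
      rw [id_tensorHom_id] at hnatα
      rw [← assoc (𝟙 _ ⊗ₘ ε), hnatα]
      have inner : (𝟙 (F.obj (𝟙_ A)) ⊗ₘ ε) ≫ F2 (𝟙_ A) (𝟙_ A) ≫ F.map (ρ_ (𝟙_ A)).hom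
          = (ρ_ (F.obj (𝟙_ A))).hom := by
        have hu : F.map (ρ_ (𝟙_ A)).hom = F.map (λ_ (𝟙_ A)).hom := by
          rw [unitors_equal]
        rw [hu]; exact E2
      have hcomb : (𝟙 (F.obj a) ⊗ₘ (𝟙 (F.obj (𝟙_ A)) ⊗ₘ ε)) ≫
            (𝟙 (F.obj a) ⊗ₘ F2 (𝟙_ A) (𝟙_ A)) ≫
            (𝟙 (F.obj a) ⊗ₘ F.map (ρ_ (𝟙_ A)).hom) ≫ F2 a (𝟙_ A)
          = (𝟙 (F.obj a) ⊗ₘ (ρ_ (F.obj (𝟙_ A))).hom) ≫ F2 a (𝟙_ A) := by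
        conv_rhs => rw [← inner]
        rw [id_tensor_comp, id_tensor_comp]
        simp only [assoc]
      simp only [assoc]
      rw [hcomb]
      rw [rightUnitor_tensor_hom, id_tensorHom]
      simp only [assoc]
    have hA := congrArg
      (fun t => (𝟙 (F.obj a ⊗ F.obj (𝟙_ A)) ⊗ₘ ε) ≫ t ≫
        F.map (𝟙 a ⊗ₘ (ρ_ (𝟙_ A)).hom)) (hassoc a (𝟙_ A) (𝟙_ A))
    simp only [assoc] at hA
    have hmain := TL.symm.trans (hA.trans TR)
    have key : ((F2 a (𝟙_ A) ≫ F.map (ρ_ a).hom) ⊗ₘ 𝟙 (𝟙_ B)) ≫ (𝟙 (F.obj a) ⊗ₘ ε)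
        = (ρ_ (F.obj a ⊗ F.obj (𝟙_ A))).hom := by
      rw [← cancel_mono (F2 a (𝟙_ A))]
      simp only [assoc]
      exact hmain
    have hfinal : (𝟙 (F.obj a) ⊗ₘ ε) =
        inv ((F2 a (𝟙_ A) ≫ F.map (ρ_ a).hom) ⊗ₘ 𝟙 (𝟙_ B)) ≫
          (ρ_ (F.obj a ⊗ F.obj (𝟙_ A))).hom := by
      rw [← key, IsIso.inv_hom_id_assoc]
    rw [← assoc, hfinal]
    simp only [assoc]
    have hrn := rightUnitor_naturality (F2 a (𝟙_ A) ≫ F.map (ρ_ a).hom)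
    rw [← tensorHom_id] at hrn
    rw [← hrn, IsIso.inv_hom_id_assoc]
  refine ⟨ε, ⟨left, right⟩, ?_⟩
  rintro ε'' ⟨hl, _⟩
  have h1 : (ε'' ⊗ₘ 𝟙 (F.obj (𝟙_ A))) ≫ (F2 (𝟙_ A) (𝟙_ A) ≫ F.map (λ_ (𝟙_ A)).hom)
      = (ε ⊗ₘ 𝟙 (F.obj (𝟙_ A))) ≫ (F2 (𝟙_ A) (𝟙_ A) ≫ F.map (λ_ (𝟙_ A)).hom) := by
    rw [E1, ← hl (𝟙_ A)]
  exact rcancel (F.obj (𝟙_ A)) ((cancel_mono _).mp h1)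

end SymmetricPicard
end

section
/- Let F, G : 𝒜 ⥤ ℬ be lax monoidal functors between symmetric Picard categories, with unit morphisms ε_F : 𝟙 ⟶ F𝟙, ε_G : 𝟙 ⟶ G𝟙 and structure morphisms F², G². If σ : F ⟶ G is a natural transformation satisfying the tensor compatibility (σ_a ⊗ σ_b) ≫ G²_{a,b} = F²_{a,b} ≫ σ_{a⊗b} for all objects a, b, then σ automatically satisfies the unit compatibility ε_F ≫ σ_𝟙 = ε_G; that is, σ is a monoidal natural transformation. -/
open CategoryTheory Category MonoidalCategory Functor.LaxMonoidal

universe v u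

namespace SymmetricPicard

universe v₁ u₁ v₂ u₂

/-- In a symmetric Picard category, right whiskering by any object is injective. -/
theorem whiskerRight_cancel_s11 {C : Type u} [Groupoid.{v} C] [MonoidalCategory C]
    [SymmetricCategory C] [SymmetricPicard C] {a b : C} (X : C) {f g : a ⟶ b}
    (h : f ▷ X = g ▷ X) : f = g := by
  let k : 𝟙_ C ≅ X ⊗ dual X := j X ≪≫ β_ (dual X) X
  have h2 : f ▷ (X ⊗ dual X) = g ▷ (X ⊗ dual X) := by
    rw [whiskerRight_tensor, whiskerRight_tensor, h]
  have key : ∀ u : a ⟶ b,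
      u = (ρ_ a).inv ≫ (a ◁ k.hom) ≫ (u ▷ (X ⊗ dual X)) ≫ (b ◁ k.inv) ≫ (ρ_ b).hom := by
    intro u
    rw [← whisker_exchange_assoc]
    simp
  rw [key f, key g, h2]

/-- Let `F, G` be lax monoidal functors between symmetric Picard categories, with unit
morphisms `ε F`, `ε G` and tensorators `μ F`, `μ G`.  A natural transformation `σ : F ⟶ G`
satisfying the tensor compatibility `(σ_a ⊗ σ_b) ≫ μ G a b = μ F a b ≫ σ_{a⊗b}`
automatically satisfies the unit compatibility `ε F ≫ σ_𝟙 = ε G`, i.e. it is a monoidal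
natural transformation. -/
theorem statement13 {A : Type u₁} [Groupoid.{v₁} A] [MonoidalCategory A]
    [SymmetricCategory A] [SymmetricPicard A]
    {B : Type u₂} [Groupoid.{v₂} B] [MonoidalCategory B]
    [SymmetricCategory B] [SymmetricPicard B]
    (F G : A ⥤ B) [F.LaxMonoidal] [G.LaxMonoidal] (σ : F ⟶ G)
    (hσ_tensor : ∀ a b : A,
        (σ.app a ⊗ₘ σ.app b) ≫ μ G a b = μ F a b ≫ σ.app (a ⊗ b)) :
    ε F ≫ σ.app (𝟙_ A) = ε G := by
  apply whiskerRight_cancel_s11 (G.obj (𝟙_ A))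
  have main :
      (𝟙_ B ◁ σ.app (𝟙_ A)) ≫ ((ε F ≫ σ.app (𝟙_ A)) ▷ G.obj (𝟙_ A)) ≫
          μ G (𝟙_ A) (𝟙_ A) ≫ G.map (λ_ (𝟙_ A)).hom =
      (𝟙_ B ◁ σ.app (𝟙_ A)) ≫ (ε G ▷ G.obj (𝟙_ A)) ≫
          μ G (𝟙_ A) (𝟙_ A) ≫ G.map (λ_ (𝟙_ A)).hom := by
    calc (𝟙_ B ◁ σ.app (𝟙_ A)) ≫ ((ε F ≫ σ.app (𝟙_ A)) ▷ G.obj (𝟙_ A)) ≫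
            μ G (𝟙_ A) (𝟙_ A) ≫ G.map (λ_ (𝟙_ A)).hom
        = (ε F ▷ F.obj (𝟙_ A)) ≫ (σ.app (𝟙_ A) ⊗ₘ σ.app (𝟙_ A)) ≫
            μ G (𝟙_ A) (𝟙_ A) ≫ G.map (λ_ (𝟙_ A)).hom := by
          rw [← tensorHom_def'_assoc, ← tensorHom_id, tensorHom_comp_tensorHom_assoc, id_comp]
      _ = (ε F ▷ F.obj (𝟙_ A)) ≫ μ F (𝟙_ A) (𝟙_ A) ≫ σ.app (𝟙_ A ⊗ 𝟙_ A) ≫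
            G.map (λ_ (𝟙_ A)).hom := by rw [reassoc_of% (hσ_tensor (𝟙_ A) (𝟙_ A))]
      _ = (ε F ▷ F.obj (𝟙_ A)) ≫ μ F (𝟙_ A) (𝟙_ A) ≫ F.map (λ_ (𝟙_ A)).hom ≫
            σ.app (𝟙_ A) := by rw [σ.naturality]
      _ = (λ_ (F.obj (𝟙_ A))).hom ≫ σ.app (𝟙_ A) := by
            rw [← Functor.LaxMonoidal.left_unitality_assoc]
      _ = (𝟙_ B ◁ σ.app (𝟙_ A)) ≫ (λ_ (G.obj (𝟙_ A))).hom := by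
            rw [leftUnitor_naturality]
      _ = (𝟙_ B ◁ σ.app (𝟙_ A)) ≫ (ε G ▷ G.obj (𝟙_ A)) ≫
            μ G (𝟙_ A) (𝟙_ A) ≫ G.map (λ_ (𝟙_ A)).hom := by
            rw [Functor.LaxMonoidal.left_unitality]
  have h2 := (cancel_epi (𝟙_ B ◁ σ.app (𝟙_ A))).mp main
  exact (cancel_mono (μ G (𝟙_ A) (𝟙_ A) ≫ G.map (λ_ (𝟙_ A)).hom)).mp (by
    simpa [assoc] using h2)

end SymmetricPicard
end
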